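/- Let θ ∈ [0, 1/2) and set α = (1/2)·ln((1/2+θ)/(1/2−θ)). Let n be a positive integer, let D_1,…,D_n be nonnegative reals with ∑_{i=1}^n D_i = 1, and let ε_1,…,ε_n ∈ {−1,+1} satisfy ∑_{i : ε_i = −1} D_i ≤ 1/2 − θ. Then ∑_{i=1}^n D_i·exp(−α·ε_i) ≤ exp(−α) + (exp(α) − exp(−α))·(1/2 − θ) = 2·√((1/2 − θ)·(1/2 + θ)). -/

import Mathlib

open scoped Classical

/-- **Bound on the AdaBoost normalization factor.**
If the weighted error `∑_{i : ε i = -1} D i` is at most `1/2 - θ` and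
`α = (1/2)·ln((1/2+θ)/(1/2-θ))`, then
`∑ D i · exp(-α·ε i) ≤ exp(-α) + (exp α - exp(-α))·(1/2-θ) = 2·√((1/2-θ)(1/2+θ))`. -/
theorem normalizer_bound (θ : ℝ) (hθ0 : 0 ≤ θ) (hθ : θ < 1 / 2)
    (α : ℝ) (hα : α = (1 / 2) * Real.log ((1 / 2 + θ) / (1 / 2 - θ)))
    (n : ℕ) (hn : 0 < n)
    (D : Fin n → ℝ) (hD0 : ∀ i, 0 ≤ D i) (hD1 : ∑ i, D i = 1)
    (ε : Fin n → ℝ) (hε : ∀ i, ε i = 1 ∨ ε i = -1)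
    (herr : ∑ i ∈ Finset.univ.filter (fun i => ε i = -1), D i ≤ 1 / 2 - θ) :
    (∑ i, D i * Real.exp (-α * ε i)
        ≤ Real.exp (-α) + (Real.exp α - Real.exp (-α)) * (1 / 2 - θ)) ∧
      Real.exp (-α) + (Real.exp α - Real.exp (-α)) * (1 / 2 - θ)
        = 2 * Real.sqrt ((1 / 2 - θ) * (1 / 2 + θ)) := by
  have hb : (0:ℝ) < 1 / 2 - θ := by linarith
  have ha : (0:ℝ) < 1 / 2 + θ := by linarith
  have hα0 : 0 ≤ α := by
    rw [hα]
    have : (1:ℝ) ≤ (1 / 2 + θ) / (1 / 2 - θ) := (one_le_div hb).mpr (by linarith)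
    have := Real.log_nonneg this
    linarith
  have hexp : Real.exp (-α) ≤ Real.exp α := Real.exp_le_exp.mpr (by linarith)
  set E : ℝ := ∑ i ∈ Finset.univ.filter (fun i => ε i = -1), D i with hE
  have hE0 : 0 ≤ E := Finset.sum_nonneg (fun i _ => hD0 i)
  have hsum1 : ∑ i ∈ Finset.univ.filter (fun i => ε i = -1), D i * Real.exp (-α * ε i)
      = Real.exp α * E := by
    rw [hE, Finset.mul_sum]
    apply Finset.sum_congr rfl
    intro i hi
    rw [Finset.mem_filter] at hi
    rw [hi.2, show -α * (-1:ℝ) = α by ring, mul_comm]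
  have hsum2 : ∑ i ∈ Finset.univ.filter (fun i => ¬ (ε i = -1)), D i * Real.exp (-α * ε i)
      = Real.exp (-α) * (1 - E) := by
    have h2 : ∑ i ∈ Finset.univ.filter (fun i => ¬ (ε i = -1)), D i = 1 - E := by
      have := Finset.sum_filter_add_sum_filter_not Finset.univ (fun i => ε i = -1) D
      rw [hD1] at this
      linarith [this]
    rw [← h2, Finset.mul_sum]
    apply Finset.sum_congr rfl
    intro i hi
    rw [Finset.mem_filter] at hi
    have hi1 : ε i = 1 := (hε i).resolve_right hi.2
    rw [hi1, mul_one, mul_comm]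
  have hsplit : ∑ i, D i * Real.exp (-α * ε i)
      = Real.exp α * E + Real.exp (-α) * (1 - E) := by
    rw [← Finset.sum_filter_add_sum_filter_not Finset.univ (fun i => ε i = -1)
      (fun i => D i * Real.exp (-α * ε i)), hsum1, hsum2]
  constructor
  · rw [hsplit]
    nlinarith [mul_le_mul_of_nonneg_left herr (by linarith : (0:ℝ) ≤ Real.exp α - Real.exp (-α))]
  · have hea : Real.exp α = Real.sqrt (1 / 2 + θ) / Real.sqrt (1 / 2 - θ) := by
      rw [hα, mul_comm, ← Real.rpow_def_of_pos (by positivity),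
        ← Real.sqrt_eq_rpow, Real.sqrt_div ha.le]
    have hena : Real.exp (-α) = Real.sqrt (1 / 2 - θ) / Real.sqrt (1 / 2 + θ) := by
      have hneg : -α = (1 / 2) * Real.log ((1 / 2 - θ) / (1 / 2 + θ)) := by
        rw [hα, show (1/2-θ)/(1/2+θ) = ((1/2+θ)/(1/2-θ))⁻¹ by rw [inv_div], Real.log_inv]
        ring
      rw [hneg, mul_comm, ← Real.rpow_def_of_pos (by positivity),
        ← Real.sqrt_eq_rpow, Real.sqrt_div hb.le]
    have hmul : Real.sqrt ((1 / 2 - θ) * (1 / 2 + θ))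
        = Real.sqrt (1 / 2 - θ) * Real.sqrt (1 / 2 + θ) := Real.sqrt_mul hb.le _
    set sa := Real.sqrt (1 / 2 + θ)
    set sb := Real.sqrt (1 / 2 - θ)
    have hsa : sa * sa = 1 / 2 + θ := Real.mul_self_sqrt ha.le
    have hsb : sb * sb = 1 / 2 - θ := Real.mul_self_sqrt hb.le
    have hsa0 : 0 < sa := Real.sqrt_pos.mpr ha
    have hsb0 : 0 < sb := Real.sqrt_pos.mpr hb
    have h1 : sa * sa + sb * sb = 1 := by rw [hsa, hsb]; ring
    rw [hea, hena, hmul, ← hsb]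
    field_simp
    linear_combination (-1 : ℝ) * h1
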